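/- arXiv:2506.06653 — 2 statements merged into one kernel-verified Lean document; each statement's English description precedes it below -/
import Mathlib

section
/- Pairwise Monotonicity for the Shapley value: if v(S∪{i}) ≤ v(S∪{j}) for all S ⊆ M\{i,j}, then SH_i(v) ≤ SH_j(v). -/
open Finset MeasureTheory ProbabilityTheory

noncomputable def SH {m : ℕ} (v : Finset (Fin m) → ℝ) (i : Fin m) : ℝ :=
  ∑ S ∈ (Finset.univ.erase i).powerset,
    ((S.card.factorial * (m - S.card - 1).factorial : ℝ) / m.factorial) *
      (v (insert i S) - v S)

lemma erase_eq_insert_sdiff {m : ℕ} (i j : Fin m) (hij : i ≠ j) :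
    (Finset.univ.erase i : Finset (Fin m)) = insert j (Finset.univ \ {i, j}) := by
  ext x
  simp only [mem_erase, mem_insert, mem_sdiff, mem_univ, mem_insert, mem_singleton,
    true_and]
  by_cases hxj : x = j
  · subst hxj; simp [hij.symm]
  · simp [hxj]
  
theorem shapley_pairwise_monotonicity {m : ℕ} (v : Finset (Fin m) → ℝ) (hv : v ∅ = 0)
    (i j : Fin m) (hij : i ≠ j)
    (hmono : ∀ S ∈ (Finset.univ \ {i, j} : Finset (Fin m)).powerset,
      v (insert i S) ≤ v (insert j S)) :
    SH v i ≤ SH v j := by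
  have hji : ({j, i} : Finset (Fin m)) = {i, j} := by
    ext x; simp [or_comm]
  have hjnot : j ∉ (Finset.univ \ {i, j} : Finset (Fin m)) := by simp
  have hinot : i ∉ (Finset.univ \ {i, j} : Finset (Fin m)) := by simp
  have hei : (Finset.univ.erase i : Finset (Fin m)) = insert j (Finset.univ \ {i, j}) :=
    erase_eq_insert_sdiff i j hij
  have hej : (Finset.univ.erase j : Finset (Fin m)) = insert i (Finset.univ \ {i, j}) := by
    rw [erase_eq_insert_sdiff j i hij.symm, hji]
  unfold SH
  rw [hei, hej, Finset.sum_powerset_insert hjnot, Finset.sum_powerset_insert hinot]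
  apply add_le_add <;> apply Finset.sum_le_sum <;> intro S hS
  · have h := hmono S hS
    have hw : (0:ℝ) ≤ (S.card.factorial * (m - S.card - 1).factorial : ℝ) / m.factorial := by
      positivity
    nlinarith
  · simp only [mem_powerset] at hS
    have hjS : j ∉ S := fun h => hjnot (hS h)
    have hiS : i ∉ S := fun h => hinot (hS h)
    have hcard : (insert j S).card = (insert i S).card := by
      rw [card_insert_of_notMem hjS, card_insert_of_notMem hiS]
    have hcomm : insert i (insert j S) = insert j (insert i S) := by rw [Finset.insert_comm]
    have h := hmono S (mem_powerset.mpr hS)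
    rw [hcard, hcomm]
    have hw : (0:ℝ) ≤ ((insert i S).card.factorial * (m - (insert i S).card - 1).factorial : ℝ) / m.factorial := by
      positivity
    nlinarith
end

section
/- Incompatibility of Linearity with Completeness and Dummy for risk attribution methods: there exist random variables X₁, X₂ with standard deviations σ₁, σ₂ > 0 and correlation ρ ∈ (−1,1) such that no attribution method A satisfying Completeness (Σᵢ Aᵢ(h) = STD(h(X₁,X₂)) for each h), Dummy (Aᵢ(h) = 0 when h does not depend on xᵢ), and Linearity (Aᵢ(f+g) = Aᵢ(f)+Aᵢ(g)) exists; concretely, taking f(x₁,x₂)=x₁ and g(x₁,x₂)=x₂, these axioms force σ₁ + σ₂ = √(σ₁² + σ₂² + 2ρσ₁σ₂), which fails whenever ρ < 1 and σ₁σ₂ > 0. -/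
theorem linearity_incompatible_with_completeness_dummy
    (σ₁ σ₂ ρ : ℝ) (h1 : 0 < σ₁) (h2 : 0 < σ₂) (hρ : ρ ∈ Set.Ioo (-1 : ℝ) 1)
    (Risk : (ℝ → ℝ → ℝ) → ℝ)
    (hX : Risk (fun x _ => x) = σ₁)
    (hY : Risk (fun _ y => y) = σ₂)
    (hXY : Risk (fun x y => x + y) = Real.sqrt (σ₁ ^ 2 + σ₂ ^ 2 + 2 * ρ * σ₁ * σ₂)) :
    ¬ ∃ A : Fin 2 → (ℝ → ℝ → ℝ) → ℝ,
      (∀ h : ℝ → ℝ → ℝ, A 0 h + A 1 h = Risk h) ∧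
      (∀ h : ℝ → ℝ → ℝ, (∀ x x' y, h x y = h x' y) → A 0 h = 0) ∧
      (∀ h : ℝ → ℝ → ℝ, (∀ x y y', h x y = h x y') → A 1 h = 0) ∧
      (∀ (f g : ℝ → ℝ → ℝ) (i : Fin 2),
        A i (fun x y => f x y + g x y) = A i f + A i g) := by
  rintro ⟨A, hcomp, hd0, hd1, hlin⟩
  have hA1f : A 1 (fun x _ => x) = 0 := hd1 _ (fun _ _ _ => rfl)
  have hA0g : A 0 (fun _ y => y) = 0 := hd0 _ (fun _ _ _ => rfl)
  have hA0f : A 0 (fun x _ => x) = σ₁ := by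
    have := hcomp (fun x _ => x); rw [hX, hA1f] at this; linarith
  have hA1g : A 1 (fun _ y => y) = σ₂ := by
    have := hcomp (fun _ y => y); rw [hY, hA0g] at this; linarith
  have hsum : σ₁ + σ₂ = Real.sqrt (σ₁ ^ 2 + σ₂ ^ 2 + 2 * ρ * σ₁ * σ₂) := by
    have h0 := hlin (fun x _ => x) (fun _ y => y) 0
    have h1' := hlin (fun x _ => x) (fun _ y => y) 1
    have hc := hcomp (fun x y => x + y)
    rw [hXY] at hc
    rw [hA0f, hA0g] at h0
    rw [hA1f, hA1g] at h1'
    linarith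
  have hlt : Real.sqrt (σ₁ ^ 2 + σ₂ ^ 2 + 2 * ρ * σ₁ * σ₂) < σ₁ + σ₂ := by
    have h : σ₁ ^ 2 + σ₂ ^ 2 + 2 * ρ * σ₁ * σ₂ < (σ₁ + σ₂) ^ 2 := by
      have : ρ * σ₁ * σ₂ < σ₁ * σ₂ := by nlinarith [hρ.2, mul_pos h1 h2]
      nlinarith
    calc Real.sqrt (σ₁ ^ 2 + σ₂ ^ 2 + 2 * ρ * σ₁ * σ₂)
        < Real.sqrt ((σ₁ + σ₂) ^ 2) := by
          apply Real.sqrt_lt_sqrt _ h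
          nlinarith [hρ.1, mul_pos h1 h2, sq_nonneg (σ₁-σ₂)]
      _ = σ₁ + σ₂ := by rw [Real.sqrt_sq (by linarith)]
  linarith
end
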